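/- The function F(γ) = (∑ᵢ νᵢ xᵢ(0)/γᵢ)/(∑ᵢ νᵢ/γᵢ), as a function of a single coordinate γⱼ ∈ (0,∞) with the other coordinates fixed, is monotone: it is nondecreasing in γⱼ if xⱼ(0) ≤ F(γ) and nonincreasing if xⱼ(0) ≥ F(γ). Consequently, on a box [γ̲, γ̄] (entrywise, with 0 < γ̲ᵢ ≤ γ̄ᵢ), the minimum and maximum of F are attained at a point where each coordinate equals either γ̲ᵢ or γ̄ᵢ. -/

import Mathlib

open BigOperators Finset


noncomputable def Fval {n : ℕ} (ν x0 γ : Fin n → ℝ) : ℝ :=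
  (∑ i, ν i * x0 i / γ i) / (∑ i, ν i / γ i)

lemma Fkey {n : ℕ} (ν x0 : Fin n → ℝ) (hν : ∀ i, 0 < ν i) (hνsum : ∑ i, ν i = 1)
    (γ γ' : Fin n → ℝ) (j : Fin n) (hγ : ∀ i, 0 < γ i) (hγ' : ∀ i, 0 < γ' i)
    (heq : ∀ i, i ≠ j → γ i = γ' i) (hle : γ j ≤ γ' j) :
    (x0 j ≤ Fval ν x0 γ → Fval ν x0 γ ≤ Fval ν x0 γ') ∧
    (Fval ν x0 γ ≤ x0 j → Fval ν x0 γ' ≤ Fval ν x0 γ) := by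
  have hne : (univ : Finset (Fin n)).Nonempty := by
    by_contra h
    rw [not_nonempty_iff_eq_empty] at h
    simp [h] at hνsum
  set A := ∑ i, ν i * x0 i / γ i with hA
  set B := ∑ i, ν i / γ i with hB
  set A' := ∑ i, ν i * x0 i / γ' i with hA'
  set B' := ∑ i, ν i / γ' i with hB'
  have hBpos : 0 < B := Finset.sum_pos (fun i _ => div_pos (hν i) (hγ i)) hne
  have hB'pos : 0 < B' := Finset.sum_pos (fun i _ => div_pos (hν i) (hγ' i)) hne
  have hdA : A' - A = ν j * x0 j / γ' j - ν j * x0 j / γ j := by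
    rw [hA, hA', ← Finset.sum_sub_distrib]
    exact Fintype.sum_eq_single j (fun i hij => by rw [heq i hij]; ring)
  have hdB : B' - B = ν j / γ' j - ν j / γ j := by
    rw [hB, hB', ← Finset.sum_sub_distrib]
    exact Fintype.sum_eq_single j (fun i hij => by rw [heq i hij]; ring)
  have hdle : B' - B ≤ 0 := by
    have h1 : ν j / γ' j ≤ ν j / γ j :=
      div_le_div_of_nonneg_left (hν j).le (hγ j) hle
    linarith [hdB]
  have hA3 : A' = A + x0 j * (B' - B) := by
    have h2 : ν j * x0 j / γ' j - ν j * x0 j / γ j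
        = x0 j * (ν j / γ' j - ν j / γ j) := by ring
    have := hdA
    rw [h2, ← hdB] at this
    linarith
  unfold Fval
  rw [← hA, ← hB, ← hA', ← hB']
  constructor
  · intro h
    have hx : x0 j * B ≤ A := (le_div_iff₀ hBpos).mp h
    rw [div_le_div_iff₀ hBpos hB'pos, hA3]
    nlinarith [mul_nonneg (sub_nonneg.mpr hx) (neg_nonneg.mpr hdle)]
  · intro h
    have hx : A ≤ x0 j * B := (div_le_iff₀ hBpos).mp h
    rw [div_le_div_iff₀ hB'pos hBpos, hA3]
    nlinarith [mul_nonneg (sub_nonneg.mpr hx) (neg_nonneg.mpr hdle)]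

section
variable {n : ℕ} (ν x0 lo hi : Fin n → ℝ)

lemma push_min (hν : ∀ i, 0 < ν i) (hνsum : ∑ i, ν i = 1)
    (hlo : ∀ i, 0 < lo i) (hlohi : ∀ i, lo i ≤ hi i) :
    ∀ s : Finset (Fin n), ∀ γ : Fin n → ℝ,
      (∀ i, lo i ≤ γ i ∧ γ i ≤ hi i) →
      (∀ i, i ∉ s → γ i = lo i ∨ γ i = hi i) →
      ∃ v : Fin n → ℝ, (∀ i, v i = lo i ∨ v i = hi i) ∧ Fval ν x0 v ≤ Fval ν x0 γ := by
  intro s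
  induction s using Finset.induction_on with
  | empty =>
    intro γ hbox hvert
    exact ⟨γ, fun i => hvert i (Finset.notMem_empty i), le_refl _⟩
  | @insert a s ha ih =>
    intro γ hbox hvert
    have hγpos : ∀ i, 0 < γ i := fun i => lt_of_lt_of_le (hlo i) (hbox i).1
    -- γlo : update coordinate a to lo a
    set γlo := Function.update γ a (lo a) with hγlo
    have hγlo_eq : ∀ i, i ≠ a → γlo i = γ i := fun i hi => Function.update_of_ne hi _ _
    have hγlo_a : γlo a = lo a := Function.update_self _ _ _
    have hγlo_box : ∀ i, lo i ≤ γlo i ∧ γlo i ≤ hi i := by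
      intro i
      rcases eq_or_ne i a with rfl | hi
      · rw [hγlo_a]; exact ⟨le_refl _, hlohi i⟩
      · rw [hγlo_eq i hi]; exact hbox i
    have hγlo_pos : ∀ i, 0 < γlo i := fun i => lt_of_lt_of_le (hlo i) (hγlo_box i).1
    have hγlo_vert : ∀ i, i ∉ s → γlo i = lo i ∨ γlo i = hi i := by
      intro i his
      rcases eq_or_ne i a with rfl | hi
      · exact Or.inl hγlo_a
      · rw [hγlo_eq i hi]
        exact hvert i (by simp [his, hi])
    have hle_lo : γlo a ≤ γ a := by rw [hγlo_a]; exact (hbox a).1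
    have hkey_lo := Fkey ν x0 hν hνsum γlo γ a hγlo_pos hγpos
      (fun i hi => hγlo_eq i hi) hle_lo
    rcases le_total (x0 a) (Fval ν x0 γlo) with hc | hc
    · -- F γlo ≤ F γ
      obtain ⟨v, hv1, hv2⟩ := ih γlo hγlo_box hγlo_vert
      exact ⟨v, hv1, le_trans hv2 (hkey_lo.1 hc)⟩
    · -- F γ ≤ F γlo ≤ x0 a, push up to hi a
      have hFγ : Fval ν x0 γ ≤ Fval ν x0 γlo := hkey_lo.2 hc
      set γhi := Function.update γ a (hi a) with hγhi
      have hγhi_eq : ∀ i, i ≠ a → γhi i = γ i := fun i hi => Function.update_of_ne hi _ _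
      have hγhi_a : γhi a = hi a := Function.update_self _ _ _
      have hγhi_box : ∀ i, lo i ≤ γhi i ∧ γhi i ≤ hi i := by
        intro i
        rcases eq_or_ne i a with rfl | hi
        · rw [hγhi_a]; exact ⟨hlohi i, le_refl _⟩
        · rw [hγhi_eq i hi]; exact hbox i
      have hγhi_pos : ∀ i, 0 < γhi i := fun i => lt_of_lt_of_le (hlo i) (hγhi_box i).1
      have hγhi_vert : ∀ i, i ∉ s → γhi i = lo i ∨ γhi i = hi i := by
        intro i his
        rcases eq_or_ne i a with rfl | hi
        · exact Or.inr hγhi_a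
        · rw [hγhi_eq i hi]
          exact hvert i (by simp [his, hi])
      have hkey_hi := Fkey ν x0 hν hνsum γ γhi a hγpos hγhi_pos
        (fun i hi => (hγhi_eq i hi).symm) (by rw [hγhi_a]; exact (hbox a).2)
      have hc2 : Fval ν x0 γ ≤ x0 a := le_trans hFγ hc
      obtain ⟨v, hv1, hv2⟩ := ih γhi hγhi_box hγhi_vert
      exact ⟨v, hv1, le_trans hv2 (hkey_hi.2 hc2)⟩

lemma push_max (hν : ∀ i, 0 < ν i) (hνsum : ∑ i, ν i = 1)
    (hlo : ∀ i, 0 < lo i) (hlohi : ∀ i, lo i ≤ hi i) :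
    ∀ s : Finset (Fin n), ∀ γ : Fin n → ℝ,
      (∀ i, lo i ≤ γ i ∧ γ i ≤ hi i) →
      (∀ i, i ∉ s → γ i = lo i ∨ γ i = hi i) →
      ∃ v : Fin n → ℝ, (∀ i, v i = lo i ∨ v i = hi i) ∧ Fval ν x0 γ ≤ Fval ν x0 v := by
  intro s
  induction s using Finset.induction_on with
  | empty =>
    intro γ hbox hvert
    exact ⟨γ, fun i => hvert i (Finset.notMem_empty i), le_refl _⟩
  | @insert a s ha ih =>
    intro γ hbox hvert
    have hγpos : ∀ i, 0 < γ i := fun i => lt_of_lt_of_le (hlo i) (hbox i).1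
    set γlo := Function.update γ a (lo a) with hγlo
    have hγlo_eq : ∀ i, i ≠ a → γlo i = γ i := fun i hi => Function.update_of_ne hi _ _
    have hγlo_a : γlo a = lo a := Function.update_self _ _ _
    have hγlo_box : ∀ i, lo i ≤ γlo i ∧ γlo i ≤ hi i := by
      intro i
      rcases eq_or_ne i a with rfl | hi
      · rw [hγlo_a]; exact ⟨le_refl _, hlohi i⟩
      · rw [hγlo_eq i hi]; exact hbox i
    have hγlo_pos : ∀ i, 0 < γlo i := fun i => lt_of_lt_of_le (hlo i) (hγlo_box i).1
    have hγlo_vert : ∀ i, i ∉ s → γlo i = lo i ∨ γlo i = hi i := by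
      intro i his
      rcases eq_or_ne i a with rfl | hi
      · exact Or.inl hγlo_a
      · rw [hγlo_eq i hi]
        exact hvert i (by simp [his, hi])
    have hkey_lo := Fkey ν x0 hν hνsum γlo γ a hγlo_pos hγpos
      (fun i hi => hγlo_eq i hi) (by rw [hγlo_a]; exact (hbox a).1)
    rcases le_total (Fval ν x0 γlo) (x0 a) with hc | hc
    · -- F γ ≤ F γlo
      obtain ⟨v, hv1, hv2⟩ := ih γlo hγlo_box hγlo_vert
      exact ⟨v, hv1, le_trans (hkey_lo.2 hc) hv2⟩
    · -- x0 a ≤ F γlo ≤ F γ, push up to hi a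
      have hFγ : Fval ν x0 γlo ≤ Fval ν x0 γ := hkey_lo.1 hc
      set γhi := Function.update γ a (hi a) with hγhi
      have hγhi_eq : ∀ i, i ≠ a → γhi i = γ i := fun i hi => Function.update_of_ne hi _ _
      have hγhi_a : γhi a = hi a := Function.update_self _ _ _
      have hγhi_box : ∀ i, lo i ≤ γhi i ∧ γhi i ≤ hi i := by
        intro i
        rcases eq_or_ne i a with rfl | hi
        · rw [hγhi_a]; exact ⟨hlohi i, le_refl _⟩
        · rw [hγhi_eq i hi]; exact hbox i
      have hγhi_pos : ∀ i, 0 < γhi i := fun i => lt_of_lt_of_le (hlo i) (hγhi_box i).1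
      have hγhi_vert : ∀ i, i ∉ s → γhi i = lo i ∨ γhi i = hi i := by
        intro i his
        rcases eq_or_ne i a with rfl | hi
        · exact Or.inr hγhi_a
        · rw [hγhi_eq i hi]
          exact hvert i (by simp [his, hi])
      have hkey_hi := Fkey ν x0 hν hνsum γ γhi a hγpos hγhi_pos
        (fun i hi => (hγhi_eq i hi).symm) (by rw [hγhi_a]; exact (hbox a).2)
      have hc2 : x0 a ≤ Fval ν x0 γ := le_trans hc hFγ
      obtain ⟨v, hv1, hv2⟩ := ih γhi hγhi_box hγhi_vert
      exact ⟨v, hv1, le_trans (hkey_hi.1 hc2) hv2⟩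

end


section
variable {n : ℕ} (ν x0 lo hi : Fin n → ℝ)

lemma vertex_mem (v : Fin n → ℝ) (hv : ∀ i, v i = lo i ∨ v i = hi i) :
    v ∈ Finset.image (fun b : Fin n → Bool => fun i => if b i then hi i else lo i)
      (Finset.univ : Finset (Fin n → Bool)) := by
  rw [Finset.mem_image]
  refine ⟨fun i => decide (v i = hi i), Finset.mem_univ _, ?_⟩
  funext i
  by_cases h : v i = hi i
  · simp [h]
  · have h' : v i = lo i := (hv i).resolve_right h
    simp only [h, decide_eq_false_iff_not, not_false_iff, if_neg, decide_false]
    exact h'.symm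

end


theorem F_coordinatewise_monotone_and_extrema_at_vertices
    {n : ℕ} (ν x0 lo hi : Fin n → ℝ)
    (hν : ∀ i, 0 < ν i) (hνsum : ∑ i, ν i = 1)
    (hlo : ∀ i, 0 < lo i) (hlohi : ∀ i, lo i ≤ hi i) :
    -- F(γ) := (∑ᵢ νᵢ xᵢ(0)/γᵢ)/(∑ᵢ νᵢ/γᵢ)
    (∀ (γ γ' : Fin n → ℝ) (j : Fin n),
      (∀ i, 0 < γ i) → (∀ i, 0 < γ' i) → (∀ i, i ≠ j → γ i = γ' i) → γ j ≤ γ' j →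
      (x0 j ≤ (∑ i, ν i * x0 i / γ i) / (∑ i, ν i / γ i) →
        (∑ i, ν i * x0 i / γ i) / (∑ i, ν i / γ i) ≤
          (∑ i, ν i * x0 i / γ' i) / (∑ i, ν i / γ' i)) ∧
      ((∑ i, ν i * x0 i / γ i) / (∑ i, ν i / γ i) ≤ x0 j →
        (∑ i, ν i * x0 i / γ' i) / (∑ i, ν i / γ' i) ≤
          (∑ i, ν i * x0 i / γ i) / (∑ i, ν i / γ i))) ∧
    (∃ γmin : Fin n → ℝ, (∀ i, γmin i = lo i ∨ γmin i = hi i) ∧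
      ∀ γ : Fin n → ℝ, (∀ i, lo i ≤ γ i ∧ γ i ≤ hi i) →
        (∑ i, ν i * x0 i / γmin i) / (∑ i, ν i / γmin i) ≤
          (∑ i, ν i * x0 i / γ i) / (∑ i, ν i / γ i)) ∧
    (∃ γmax : Fin n → ℝ, (∀ i, γmax i = lo i ∨ γmax i = hi i) ∧
      ∀ γ : Fin n → ℝ, (∀ i, lo i ≤ γ i ∧ γ i ≤ hi i) →
        (∑ i, ν i * x0 i / γ i) / (∑ i, ν i / γ i) ≤
          (∑ i, ν i * x0 i / γmax i) / (∑ i, ν i / γmax i)) := by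
  refine ⟨fun γ γ' j hγ hγ' heq hle => Fkey ν x0 hν hνsum γ γ' j hγ hγ' heq hle, ?_, ?_⟩
  · -- minimum
    set S := Finset.image (fun b : Fin n → Bool => fun i => if b i then hi i else lo i)
      (Finset.univ : Finset (Fin n → Bool)) with hS
    have hSne : S.Nonempty := ⟨_, vertex_mem lo hi lo (fun i => Or.inl rfl)⟩
    obtain ⟨vmin, hvminS, hmin⟩ := Finset.exists_min_image S (Fval ν x0) hSne
    have hvmin_vert : ∀ i, vmin i = lo i ∨ vmin i = hi i := by
      rw [hS, Finset.mem_image] at hvminS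
      obtain ⟨b, _, rfl⟩ := hvminS
      intro i
      by_cases h : b i <;> simp [h]
    refine ⟨vmin, hvmin_vert, fun γ hbox => ?_⟩
    obtain ⟨v, hv1, hv2⟩ := push_min ν x0 lo hi hν hνsum hlo hlohi Finset.univ γ hbox
      (fun i hi' => absurd (Finset.mem_univ i) hi')
    exact le_trans (hmin v (vertex_mem lo hi v hv1)) hv2
  · -- maximum
    set S := Finset.image (fun b : Fin n → Bool => fun i => if b i then hi i else lo i)
      (Finset.univ : Finset (Fin n → Bool)) with hS
    have hSne : S.Nonempty := ⟨_, vertex_mem lo hi lo (fun i => Or.inl rfl)⟩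
    obtain ⟨vmax, hvmaxS, hmax⟩ := Finset.exists_max_image S (Fval ν x0) hSne
    have hvmax_vert : ∀ i, vmax i = lo i ∨ vmax i = hi i := by
      rw [hS, Finset.mem_image] at hvmaxS
      obtain ⟨b, _, rfl⟩ := hvmaxS
      intro i
      by_cases h : b i <;> simp [h]
    refine ⟨vmax, hvmax_vert, fun γ hbox => ?_⟩
    obtain ⟨v, hv1, hv2⟩ := push_max ν x0 lo hi hν hνsum hlo hlohi Finset.univ γ hbox
      (fun i hi' => absurd (Finset.mem_univ i) hi')
    exact le_trans hv2 (hmax v (vertex_mem lo hi v hv1))
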